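/- Let k = ℚ. The inverse limit lim_n k^×/(k^×)^n (over positive integers n ordered by divisibility, with transition maps induced by the identity on k^×, where the map from level mn to level n is induced by the m-th power map being absorbed into the quotient) has the cardinality of the continuum. -/

import Mathlib

open Finset

namespace QInvLim

noncomputable def u2 : ℚˣ := Units.mk0 2 (by norm_num)

def expo (ε : ℕ → Bool) (n : ℕ) : ℕ :=
  ∑ j ∈ Finset.range n, if ε j then (j+1).factorial else 0

lemma exists_expo (ε : ℕ → Bool) {m n : ℕ} (hm : 0 < m) (h : m ≤ n) :
    ∃ c, expo ε n = expo ε m + m * c := by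
  have hsum : expo ε m + ∑ j ∈ Finset.Ico m n, (if ε j then (j+1).factorial else 0) = expo ε n :=
    Finset.sum_range_add_sum_Ico _ h
  have hdvd : m ∣ ∑ j ∈ Finset.Ico m n, (if ε j then (j+1).factorial else 0) := by
    refine Finset.dvd_sum fun j hj => ?_
    rcases Finset.mem_Ico.1 hj with ⟨hj1, _⟩
    split
    · exact Nat.dvd_factorial hm (by omega)
    · exact dvd_zero m
  obtain ⟨c, hc⟩ := hdvd
  exact ⟨c, by omega⟩

lemma val_ne_zero (y : ℚˣ) : (y : ℚ) ≠ 0 := y.ne_zero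

lemma key_dvd {N : ℕ} {a b : ℕ}
    (h : (QuotientGroup.mk (u2 ^ a) : ℚˣ ⧸ (powMonoidHom N : ℚˣ →* ℚˣ).range)
        = QuotientGroup.mk (u2 ^ b)) :
    (N : ℤ) ∣ (b : ℤ) - (a : ℤ) := by
  rw [QuotientGroup.eq] at h
  obtain ⟨y, hy⟩ := h
  have hy' : (y : ℚˣ) ^ N = (u2 ^ a)⁻¹ * u2 ^ b := hy
  have hq : ((y : ℚ)) ^ N = (2:ℚ) ^ b / (2:ℚ) ^ a := by
    have := congrArg (Units.val) hy'
    simpa [u2, div_eq_inv_mul] using this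
  have h2 : (2:ℚ) ≠ 0 := by norm_num
  have hself : padicValRat 2 (2:ℚ) = 1 := by
    have := padicValRat.self (p := 2) one_lt_two
    simpa using this
  have hval := congrArg (padicValRat 2) hq
  rw [padicValRat.pow (y : ℚ),
      padicValRat.div (pow_ne_zero _ h2) (pow_ne_zero _ h2),
      padicValRat.pow (2:ℚ), padicValRat.pow (2:ℚ), hself] at hval
  exact ⟨padicValRat 2 (y : ℚ), by linarith⟩

/-- compatibility -/
lemma compat (ε : ℕ → Bool) (m n : ℕ+) (hd : (m : ℕ) ∣ (n : ℕ)) (x : ℚˣ)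
    (hx : (QuotientGroup.mk x : ℚˣ ⧸ (powMonoidHom (n : ℕ) : ℚˣ →* ℚˣ).range)
        = QuotientGroup.mk (u2 ^ expo ε n)) :
    (QuotientGroup.mk x : ℚˣ ⧸ (powMonoidHom (m : ℕ) : ℚˣ →* ℚˣ).range)
        = QuotientGroup.mk (u2 ^ expo ε m) := by
  have hmn : (m : ℕ) ≤ (n : ℕ) := Nat.le_of_dvd n.pos hd
  obtain ⟨k, hk⟩ := hd
  obtain ⟨c, hc⟩ := exists_expo ε m.pos hmn
  rw [QuotientGroup.eq] at hx ⊢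
  obtain ⟨y, hy⟩ := hx
  have hy' : (y : ℚˣ) ^ (n : ℕ) = x⁻¹ * u2 ^ expo ε (n : ℕ) := hy
  refine ⟨y ^ k * (u2 ^ c)⁻¹, ?_⟩
  show (y ^ k * (u2 ^ c)⁻¹) ^ (m : ℕ) = x⁻¹ * u2 ^ expo ε (m : ℕ)
  have hstep : (y ^ k * (u2 ^ c)⁻¹) ^ (m : ℕ)
      = y ^ (n : ℕ) * (u2 ^ ((m : ℕ) * c))⁻¹ := by
    rw [mul_pow, inv_pow, ← pow_mul, ← pow_mul, mul_comm k (m : ℕ), ← hk, mul_comm c (m : ℕ)]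
  rw [hstep, hy', hc, pow_add]
  simp [mul_assoc]

/-- the factorial-divisibility contradiction -/
lemma key_not_dvd (ε ε' : ℕ → Bool) (i : ℕ) (hi : ε i ≠ ε' i)
    (hmin : ∀ j, j < i → ε j = ε' j) :
    ¬ (((i+2).factorial : ℤ) ∣
        ((expo ε' ((i+2).factorial) : ℤ) - (expo ε ((i+2).factorial) : ℤ))) := by
  intro hdvd
  set N := (i+2).factorial with hN
  set d : ℕ → ℤ := fun j => (if ε' j then ((j+1).factorial : ℤ) else 0)
    - (if ε j then ((j+1).factorial : ℤ) else 0) with hdd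
  have hsum : (expo ε' N : ℤ) - (expo ε N : ℤ) = ∑ j ∈ Finset.range N, d j := by
    simp [expo, hdd, Finset.sum_sub_distrib]
  have hiN : i ∈ Finset.range N := by
    have : i + 2 ≤ N := Nat.self_le_factorial _
    exact Finset.mem_range.2 (by omega)
  have hsplit : ∑ j ∈ Finset.range N, d j
      = d i + ∑ j ∈ (Finset.range N).erase i, d j := (Finset.add_sum_erase _ _ hiN).symm
  have herase : ((N : ℤ)) ∣ ∑ j ∈ (Finset.range N).erase i, d j := by
    refine Finset.dvd_sum fun j hj => ?_
    rcases Finset.mem_erase.1 hj with ⟨hne, hjN⟩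
    rcases lt_or_gt_of_ne hne with hlt | hgt
    · simp [hdd, hmin j hlt]
    · have hfac : ((N : ℤ)) ∣ ((j+1).factorial : ℤ) := by
        exact_mod_cast Int.natCast_dvd_natCast.2 (Nat.factorial_dvd_factorial (by omega))
      refine dvd_sub ?_ ?_ <;> · split <;> simp [hfac]
  have hdi : ((N : ℤ)) ∣ d i := by
    have := hdvd
    rw [hsum, hsplit] at this
    exact (dvd_add_right herase).mp (by rwa [add_comm] at this)
  have habs : ((N : ℤ)) ∣ ((i+1).factorial : ℤ) := by
    rcases Bool.eq_false_or_eq_true (ε i) with h1 | h1 <;>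
      rcases Bool.eq_false_or_eq_true (ε' i) with h2 | h2 <;>
      simp [h1, h2] at hi ⊢ <;>
      simpa [hdd, h1, h2, dvd_neg] using hdi
  have : (i+2).factorial ∣ (i+1).factorial := by exact_mod_cast habs
  have hlt : (i+1).factorial < (i+2).factorial := by
    exact (Nat.factorial_lt (n := i+1) (m := i+2) (by omega)).2 (by omega)
  exact absurd (Nat.le_of_dvd (Nat.factorial_pos _) this) (by omega)

end QInvLim

open QInvLim in
/-- the inverse limit `lim_n ℚ^×/(ℚ^×)^n`, over positive integers ordered by
divisibility with the canonical projections as transition maps, has the cardinality of the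
continuum. -/
theorem qunits_modpowers_invlimit_cardinality_continuum :
    Cardinal.mk
      {f : (n : ℕ+) → ℚˣ ⧸ (powMonoidHom (n : ℕ) : ℚˣ →* ℚˣ).range //
        ∀ m n : ℕ+, (m : ℕ) ∣ (n : ℕ) →
          ∀ x : ℚˣ, (QuotientGroup.mk x : ℚˣ ⧸ (powMonoidHom (n : ℕ)).range) = f n →
            (QuotientGroup.mk x : ℚˣ ⧸ (powMonoidHom (m : ℕ)).range) = f m} =
    Cardinal.continuum := by
  haveI : Countable ℚˣ := Function.Injective.countable Units.val_injective
  apply le_antisymm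
  · refine le_trans (Cardinal.mk_subtype_le _) ?_
    rw [Cardinal.mk_pi]
    refine le_trans (Cardinal.prod_le_prod _ (fun _ : ℕ+ => Cardinal.aleph0)
      (fun n => @Cardinal.mk_le_aleph0 _ (Function.Surjective.countable QuotientGroup.mk_surjective))) ?_
    rw [Cardinal.prod_const', Cardinal.mk_eq_aleph0 ℕ+, Cardinal.aleph0_power_aleph0]
  · have hinj : Function.Injective (fun ε : ℕ → Bool =>
        (⟨fun n : ℕ+ => (QuotientGroup.mk (u2 ^ expo ε (n : ℕ)) :
            ℚˣ ⧸ (powMonoidHom (n : ℕ) : ℚˣ →* ℚˣ).range),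
          fun m n hd x hx => compat ε m n hd x hx⟩ :
          {f : (n : ℕ+) → ℚˣ ⧸ (powMonoidHom (n : ℕ) : ℚˣ →* ℚˣ).range //
            ∀ m n : ℕ+, (m : ℕ) ∣ (n : ℕ) →
              ∀ x : ℚˣ, (QuotientGroup.mk x : ℚˣ ⧸ (powMonoidHom (n : ℕ)).range) = f n →
                (QuotientGroup.mk x : ℚˣ ⧸ (powMonoidHom (m : ℕ)).range) = f m})) := by
      intro ε ε' h
      by_contra hne
      have hex : ∃ i, ε i ≠ ε' i := Function.ne_iff.1 hne
      set i := Nat.find hex with hi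
      have hdiff : ε i ≠ ε' i := Nat.find_spec hex
      have hmin : ∀ j, j < i → ε j = ε' j := fun j hj => by
        have := Nat.find_min hex hj
        simpa using this
      set N : ℕ+ := ⟨(i+2).factorial, Nat.factorial_pos _⟩ with hN
      have hfn : (QuotientGroup.mk (u2 ^ expo ε ((i+2).factorial)) :
          ℚˣ ⧸ (powMonoidHom ((i+2).factorial) : ℚˣ →* ℚˣ).range)
          = QuotientGroup.mk (u2 ^ expo ε' ((i+2).factorial)) := by
        have := congrFun (congrArg Subtype.val h) N
        exact this
      exact key_not_dvd ε ε' i hdiff hmin (key_dvd hfn)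
    have := Cardinal.mk_le_of_injective hinj
    calc Cardinal.continuum = Cardinal.mk (ℕ → Bool) := by
          rw [← Cardinal.power_def, Cardinal.mk_bool, Cardinal.mk_nat,
            Cardinal.two_power_aleph0]
      _ ≤ _ := this
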